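/- arXiv:2502.05269 — 3 statements merged into one kernel-verified Lean document; each statement's English description precedes it below -/
import Mathlib

section
/- Let n ≥ 1 and k ≥ 1, let b_1 > b_2 > ⋯ > b_k be integers with 1 ≤ b_i ≤ n, and for each i let a_i be an integer with 1 ≤ a_i ≤ b_i. Then the concatenated list B_k ++ B_{k−1} ++ ⋯ ++ B_1, where B_i = (s_{b_i}, s_{b_i−1}, …, s_{a_i}), is reduced; that is, the permutation (s_{b_k}⋯s_{a_k})·(s_{b_{k−1}}⋯s_{a_{k−1}})⋯(s_{b_1}⋯s_{a_1}) cannot be written as a product of fewer than Σ_{i=1}^{k}(b_i − a_i + 1) adjacent transpositions. -/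
noncomputable section

open Fin.NatCast in
/-- The adjacent transposition `s_r = (r, r+1)` (1-based indexing) in `Perm (Fin (n+1))`,
acting on `{1,…,n+1}` identified with `Fin (n+1)`. -/
def s (n : ℕ) (r : ℕ) : Equiv.Perm (Fin (n + 1)) := Equiv.swap (↑(r - 1)) (↑r)

/-- The block `(s_b, s_{b-1}, …, s_a)`, recorded as the list of indices `[b, b-1, …, a]`. -/
def block (a b : ℕ) : List ℕ := (List.range' a (b + 1 - a)).reverse

namespace Aux

open Fin.NatCast

variable {n : ℕ}

def invSet (π : Equiv.Perm (Fin (n+1))) : Finset (Fin (n+1) × Fin (n+1)) :=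
  Finset.univ.filter fun p => p.1 < p.2 ∧ π p.2 < π p.1

def len (π : Equiv.Perm (Fin (n+1))) : ℕ := (invSet π).card

lemma val_cast (m : ℕ) (h : m ≤ n) : ((m : Fin (n+1)) : ℕ) = m := by
  rw [Fin.val_natCast]; exact Nat.mod_eq_of_lt (by omega)

lemma s_apply_val (r : ℕ) (hr1 : 1 ≤ r) (hrn : r ≤ n) (x : Fin (n+1)) :
    ((s n r) x).val = if x.val = r - 1 then r else if x.val = r then r - 1 else x.val := by
  have h1 : ((r - 1 : ℕ) : Fin (n+1)).val = r - 1 := val_cast _ (by omega)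
  have h2 : ((r : ℕ) : Fin (n+1)).val = r := val_cast _ hrn
  have e1 : (x = ((r-1 : ℕ) : Fin (n+1))) ↔ x.val = r - 1 := by rw [Fin.ext_iff, h1]
  have e2 : (x = ((r : ℕ) : Fin (n+1))) ↔ x.val = r := by rw [Fin.ext_iff, h2]
  rw [s, Equiv.swap_apply_def]
  by_cases c1 : x.val = r - 1
  · rw [if_pos (e1.mpr c1), if_pos c1, h2]
  · rw [if_neg (fun h => c1 (e1.mp h)), if_neg c1]
    by_cases c2 : x.val = r
    · rw [if_pos (e2.mpr c2), if_pos c2, h1]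
    · rw [if_neg (fun h => c2 (e2.mp h)), if_neg c2]

lemma len_one : len (1 : Equiv.Perm (Fin (n+1))) = 0 := by
  rw [len, Finset.card_eq_zero, invSet]
  ext p
  simp only [Finset.mem_filter, Finset.mem_univ, true_and, Finset.notMem_empty, iff_false]
  rintro ⟨h1, h2⟩
  simp only [Equiv.Perm.one_apply] at h2
  exact absurd h1 (not_lt.2 h2.le)

lemma len_mul_s_le (r : ℕ) (hr1 : 1 ≤ r) (hrn : r ≤ n) (π : Equiv.Perm (Fin (n+1))) :
    len (s n r * π) ≤ len π + 1 := by
  set q : Fin (n+1) × Fin (n+1) := (π⁻¹ ↑(r-1), π⁻¹ ↑r) with hq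
  have hsub : invSet (s n r * π) ⊆ invSet π ∪ {q} := by
    intro p hp
    rw [invSet, Finset.mem_filter] at hp
    obtain ⟨-, hlt, hinv⟩ := hp
    by_cases hpi : π p.2 < π p.1
    · exact Finset.mem_union_left _ (by rw [invSet, Finset.mem_filter]; exact ⟨Finset.mem_univ _, hlt, hpi⟩)
    · have hne : π p.1 ≠ π p.2 := fun h => absurd (π.injective h) hlt.ne
      have hvne : (π p.1).val ≠ (π p.2).val := fun h => hne (Fin.ext h)
      have hle : (π p.1).val < (π p.2).val := by
        rcases lt_or_ge (π p.1).val (π p.2).val with h | h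
        · exact h
        · exact absurd (Fin.lt_def.2 (lt_of_le_of_ne h (Ne.symm hvne))) hpi
      simp only [Equiv.Perm.mul_apply] at hinv
      rw [Fin.lt_def, s_apply_val r hr1 hrn, s_apply_val r hr1 hrn] at hinv
      have key : (π p.2).val = r ∧ (π p.1).val = r - 1 := by
        split_ifs at hinv <;> omega
      refine Finset.mem_union_right _ (Finset.mem_singleton.2 ?_)
      have e1 : π p.1 = ((r-1 : ℕ) : Fin (n+1)) := Fin.ext (by rw [val_cast _ (by omega)]; exact key.2)
      have e2 : π p.2 = ((r : ℕ) : Fin (n+1)) := Fin.ext (by rw [val_cast _ hrn]; exact key.1)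
      have : p.1 = π⁻¹ ↑(r-1) := by rw [← e1]; simp
      have : p.2 = π⁻¹ ↑r := by rw [← e2]; simp
      rw [hq, Prod.ext_iff]
      constructor
      · rw [← e1]; simp
      · rw [← e2]; simp
  calc len (s n r * π) ≤ (invSet π ∪ {q}).card := Finset.card_le_card hsub
    _ ≤ len π + 1 := le_trans (Finset.card_union_le _ _) (by simp [len])

lemma len_word_le (M : List ℕ) (hM : ∀ r ∈ M, 1 ≤ r ∧ r ≤ n) :
    len ((M.map (s n)).prod) ≤ M.length := by
  induction M with
  | nil => simp [len_one]
  | cons r l ih =>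
    simp only [List.map_cons, List.prod_cons, List.length_cons]
    have hr := hM r (by simp)
    have h2 := ih (fun x hx => hM x (by simp [hx]))
    calc len (s n r * (l.map (s n)).prod) ≤ len ((l.map (s n)).prod) + 1 :=
          len_mul_s_le r hr.1 hr.2 _
      _ ≤ l.length + 1 := by omega


lemma block_cons (a bb : ℕ) (ha : 1 ≤ a) (h : a ≤ bb) : block a bb = bb :: block a (bb - 1) := by
  rw [block, block]
  have h1 : bb + 1 - a = 1 + (bb - a) := by omega
  have h2 : bb - 1 + 1 - a = bb - a := by omega
  rw [h1, h2, Nat.add_comm 1 (bb - a), ← List.range'_append_1 (s := a) (m := bb - a) (n := 1)]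
  have h3 : a + (bb - a) = bb := by omega
  rw [h3, List.range'_one, List.reverse_append, List.reverse_singleton, List.singleton_append]

lemma mem_block (a bb r : ℕ) : r ∈ block a bb ↔ a ≤ r ∧ r ≤ bb ∧ a ≤ bb := by
  rw [block, List.mem_reverse, List.mem_range'_1]
  omega

lemma prod_fix (Ll : List ℕ) (B : ℕ) (h : ∀ r ∈ Ll, r ≤ B) (x : Fin (n+1)) (hx : B < x.val) :
    (Ll.map (s n)).prod x = x := by
  induction Ll with
  | nil => simp
  | cons r l ih =>
    simp only [List.map_cons, List.prod_cons, Equiv.Perm.mul_apply]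
    rw [ih (fun t ht => h t (by simp [ht]))]
    have hr := h r (by simp)
    refine Equiv.swap_apply_of_ne_of_ne ?_ ?_ <;>
      intro he <;> rw [he, Fin.val_natCast] at hx <;>
      exact absurd hx (by have := Nat.mod_le (r-1) (n+1); have := Nat.mod_le r (n+1); omega)

lemma prod_maps (Ll : List ℕ) (B : ℕ) (h : ∀ r ∈ Ll, r ≤ B) (x : Fin (n+1)) (hx : x.val ≤ B) :
    ((Ll.map (s n)).prod x).val ≤ B := by
  induction Ll with
  | nil => simpa
  | cons r l ih =>
    simp only [List.map_cons, List.prod_cons, Equiv.Perm.mul_apply]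
    have hy := ih (fun t ht => h t (by simp [ht]))
    have hr := h r (by simp)
    set y := (l.map (s n)).prod x
    rw [s, Equiv.swap_apply_def]
    split_ifs with c1 c2
    · rw [Fin.val_natCast]; have := Nat.mod_le r (n+1); omega
    · rw [Fin.val_natCast]; have := Nat.mod_le (r-1) (n+1); omega
    · exact hy

lemma bp_formula (a bb : ℕ) (ha : 1 ≤ a) (hab : a ≤ bb) (hbn : bb ≤ n) (x : Fin (n+1)) :
    (((block a bb).map (s n)).prod x).val =
      if x.val = a - 1 then bb else if a - 1 < x.val ∧ x.val ≤ bb then x.val - 1 else x.val := by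
  induction bb, hab using Nat.le_induction generalizing x with
  | base =>
    have hblock : block a a = [a] := by
      rw [block]
      have : a + 1 - a = 1 := by omega
      rw [this, List.range'_one, List.reverse_singleton]
    rw [hblock, List.map_singleton, List.prod_singleton, s_apply_val a ha hbn]
    split_ifs <;> omega
  | succ m hm ih =>
    have hb : (m + 1) - 1 = m := by omega
    rw [block_cons a (m+1) ha (by omega), hb, List.map_cons, List.prod_cons,
      Equiv.Perm.mul_apply, s_apply_val (m+1) (by omega) hbn]
    have hy := ih (by omega) x
    split_ifs at hy ⊢ <;> omega

lemma bp_big (a bb : ℕ) (ha : 1 ≤ a) (hab : a ≤ bb) (hbn : bb ≤ n) (x y : Fin (n+1))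
    (hxy : x < y) (hinv : ((block a bb).map (s n)).prod y < ((block a bb).map (s n)).prod x) :
    (((block a bb).map (s n)).prod x).val = bb ∧ (((block a bb).map (s n)).prod y).val < bb := by
  have hx := bp_formula a bb ha hab hbn x
  have hy := bp_formula a bb ha hab hbn y
  rw [Fin.lt_def] at hxy hinv
  split_ifs at hx hy <;> omega

lemma bp_len (a bb : ℕ) (ha : 1 ≤ a) (hab : a ≤ bb) (hbn : bb ≤ n) :
    bb - a + 1 ≤ len (((block a bb).map (s n)).prod) := by
  classical
  set ρ := ((block a bb).map (s n)).prod with hρ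
  set P := (Finset.Icc a bb).image
    (fun j : ℕ => (((a - 1 : ℕ) : Fin (n+1)), ((j : ℕ) : Fin (n+1)))) with hP
  have hsub : P ⊆ invSet ρ := by
    intro p hp
    rw [hP, Finset.mem_image] at hp
    obtain ⟨j, hj, rfl⟩ := hp
    rw [Finset.mem_Icc] at hj
    have v1 : ((a - 1 : ℕ) : Fin (n+1)).val = a - 1 := val_cast _ (by omega)
    have v2 : ((j : ℕ) : Fin (n+1)).val = j := val_cast _ (by omega)
    rw [invSet, Finset.mem_filter]
    dsimp only
    refine ⟨Finset.mem_univ _, Fin.lt_def.2 (by rw [v1, v2]; omega), Fin.lt_def.2 ?_⟩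
    have f1 := bp_formula a bb ha hab hbn ((a - 1 : ℕ) : Fin (n+1))
    have f2 := bp_formula a bb ha hab hbn ((j : ℕ) : Fin (n+1))
    rw [v1, ← hρ] at f1
    rw [v2, ← hρ] at f2
    split_ifs at f1 f2 <;> omega
  have hinj : Set.InjOn (fun j : ℕ => (((a - 1 : ℕ) : Fin (n+1)), ((j : ℕ) : Fin (n+1))))
      (Finset.Icc a bb) := by
    intro j1 h1 j2 h2 he
    rw [Finset.coe_Icc, Set.mem_Icc] at h1 h2
    have h2' := congrArg (fun p : Fin (n+1) × Fin (n+1) => p.2) he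
    dsimp only at h2'
    have hv := congrArg Fin.val h2'
    rwa [val_cast j1 (by omega), val_cast j2 (by omega)] at hv
  have hcard : P.card = bb - a + 1 := by
    rw [hP, Finset.card_image_of_injOn hinj, Nat.card_Icc]
    omega
  rw [len, ← hcard]
  exact Finset.card_le_card hsub

lemma len_mul_ge (τ ρ : Equiv.Perm (Fin (n+1)))
    (H : ∀ x y : Fin (n+1), x < y → ρ y < ρ x → τ (ρ y) < τ (ρ x)) :
    len τ + len ρ ≤ len (τ * ρ) := by
  classical
  set F : Fin (n+1) × Fin (n+1) → Fin (n+1) × Fin (n+1) := fun p => (ρ⁻¹ p.1, ρ⁻¹ p.2) with hF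
  have h1 : invSet ρ ⊆ invSet (τ * ρ) := by
    intro p hp
    rw [invSet, Finset.mem_filter] at hp ⊢
    exact ⟨Finset.mem_univ _, hp.2.1, by
      simp only [Equiv.Perm.mul_apply]; exact H p.1 p.2 hp.2.1 hp.2.2⟩
  have h2 : (invSet τ).image F ⊆ invSet (τ * ρ) := by
    intro p hp
    rw [Finset.mem_image] at hp
    obtain ⟨q, hq, rfl⟩ := hp
    rw [invSet, Finset.mem_filter] at hq
    obtain ⟨-, hq1, hq2⟩ := hq
    have hord : ρ⁻¹ q.1 < ρ⁻¹ q.2 := by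
      rcases lt_trichotomy (ρ⁻¹ q.1) (ρ⁻¹ q.2) with h | h | h
      · exact h
      · exact absurd (congrArg ρ h) (by simp [hq1.ne])
      · have := H _ _ h (by simp [hq1])
        simp only [Equiv.Perm.inv_def, Equiv.apply_symm_apply] at this
        exact absurd hq2 (asymm this)
    rw [invSet, Finset.mem_filter]
    refine ⟨Finset.mem_univ _, hord, ?_⟩
    simp only [hF, Equiv.Perm.mul_apply, Equiv.Perm.inv_def, Equiv.apply_symm_apply]
    exact hq2
  have hdisj : Disjoint (invSet ρ) ((invSet τ).image F) := by
    rw [Finset.disjoint_left]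
    intro p hp hp2
    rw [invSet, Finset.mem_filter] at hp
    rw [Finset.mem_image] at hp2
    obtain ⟨q, hq, he⟩ := hp2
    rw [invSet, Finset.mem_filter] at hq
    have e1 : ρ p.1 = q.1 := by rw [← he]; simp [hF]
    have e2 : ρ p.2 = q.2 := by rw [← he]; simp [hF]
    rw [← e1, ← e2] at hq
    exact absurd hp.2.2 (asymm hq.2.1)
  have hinj : Set.InjOn F (invSet τ) := by
    intro p _ q _ he
    have e1 := congrArg Prod.fst he
    have e2 := congrArg Prod.snd he
    simp only [hF] at e1 e2
    exact Prod.ext ((Equiv.injective _) e1) ((Equiv.injective _) e2)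
  calc len τ + len ρ = ((invSet τ).image F).card + (invSet ρ).card := by
        rw [len, len, Finset.card_image_of_injOn hinj]
    _ = (invSet ρ ∪ (invSet τ).image F).card := by
        rw [Finset.card_union_of_disjoint hdisj]; omega
    _ ≤ len (τ * ρ) := Finset.card_le_card (Finset.union_subset h1 h2)

lemma main_ind (k : ℕ) (b a : Fin k → ℕ)
    (hb : ∀ i, 1 ≤ b i ∧ b i ≤ n)
    (hdec : ∀ i j : Fin k, i < j → b j < b i)
    (ha : ∀ i, 1 ≤ a i ∧ a i ≤ b i) :
    (∑ i : Fin k, (b i - a i + 1)) ≤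
      len (((((List.ofFn fun i : Fin k => block (a i) (b i)).reverse).flatten).map (s n)).prod) := by
  induction k with
  | zero => simp [len_one]
  | succ k ih =>
    rw [List.ofFn_succ, List.reverse_cons, List.flatten_append, List.flatten_cons,
      List.flatten_nil, List.append_nil, List.map_append, List.prod_append]
    set τ := ((((List.ofFn fun i : Fin k => block (a i.succ) (b i.succ)).reverse).flatten).map (s n)).prod with hτ
    set ρ := ((block (a 0) (b 0)).map (s n)).prod with hρ
    have hb0 := hb 0
    have ha0 := ha 0
    have hletters : ∀ r ∈ ((List.ofFn fun i : Fin k => block (a i.succ) (b i.succ)).reverse).flatten,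
        r ≤ b 0 - 1 := by
      intro r hr
      rw [List.mem_flatten] at hr
      obtain ⟨l, hl, hrl⟩ := hr
      rw [List.mem_reverse, List.mem_ofFn] at hl
      obtain ⟨i, rfl⟩ := hl
      rw [mem_block] at hrl
      have := hdec 0 i.succ (Fin.succ_pos i)
      omega
    have H : ∀ x y : Fin (n+1), x < y → ρ y < ρ x → τ (ρ y) < τ (ρ x) := by
      intro x y hxy hinv
      have hbig := bp_big (a 0) (b 0) ha0.1 ha0.2 hb0.2 x y hxy hinv
      rw [← hρ] at hbig
      obtain ⟨hx, hy⟩ := hbig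
      have hfix : τ (ρ x) = ρ x :=
        prod_fix _ (b 0 - 1) hletters _ (by omega)
      have hmap : (τ (ρ y)).val ≤ b 0 - 1 :=
        prod_maps _ (b 0 - 1) hletters _ (by omega)
      have hfix' : (τ (ρ x)).val = (ρ x).val := congrArg Fin.val hfix
      rw [Fin.lt_def]
      omega
    have hIH := ih (fun i => b i.succ) (fun i => a i.succ) (fun i => hb i.succ)
      (fun i j hij => hdec i.succ j.succ (Fin.succ_lt_succ_iff.2 hij)) (fun i => ha i.succ)
    rw [← hτ] at hIH
    have hbp := bp_len (a 0) (b 0) ha0.1 ha0.2 hb0.2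
    rw [← hρ] at hbp
    calc ∑ i : Fin (k+1), (b i - a i + 1)
        = (b 0 - a 0 + 1) + ∑ i : Fin k, (b i.succ - a i.succ + 1) := Fin.sum_univ_succ _
      _ ≤ len τ + len ρ := by omega
      _ ≤ len (τ * ρ) := len_mul_ge τ ρ H

end Aux

/-- Let `b_1 > b_2 > ⋯ > b_k` with `1 ≤ b_i ≤ n` and `1 ≤ a_i ≤ b_i`.  Then the
concatenated list `B_k ++ ⋯ ++ B_1`, with `B_i = (s_{b_i}, …, s_{a_i})`, is reduced: its
permutation product cannot be written as a product of fewer than `Σ (b_i - a_i + 1)`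
adjacent transpositions. -/
theorem stmt0 (n k : ℕ) (hn : 1 ≤ n) (hk : 1 ≤ k)
    (b a : Fin k → ℕ)
    (hb : ∀ i, 1 ≤ b i ∧ b i ≤ n)
    (hdec : ∀ i j : Fin k, i < j → b j < b i)
    (ha : ∀ i, 1 ≤ a i ∧ a i ≤ b i)
    (L : List ℕ)
    (hL : L = ((List.ofFn fun i : Fin k => block (a i) (b i)).reverse).flatten) :
    ∀ M : List ℕ, (∀ r ∈ M, 1 ≤ r ∧ r ≤ n) →
      (M.map (s n)).prod = (L.map (s n)).prod →
      (∑ i : Fin k, (b i - a i + 1)) ≤ M.length := by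
  intro M hM hprod
  have h1 := Aux.main_ind k b a hb hdec ha
  rw [← hL, ← hprod] at h1
  exact le_trans h1 (Aux.len_word_le M hM)
end
end

section
/- Every permutation u of Fin (n+1) is the product of some sublist of the staircase list L_max; that is, for every u in Perm (Fin (n+1)) there exists a sublist M of L_max (a list obtained from L_max by deleting some of its entries, keeping the order) such that the product of M equals u. -/
noncomputable section

/-- The staircase list `L_max`: concatenation of the blocks `(s_p, …, s_1)` for
`p = 1, …, n`, of length `n(n+1)/2`. -/
def Lmax (n : ℕ) : List ℕ :=
  (List.ofFn fun p : Fin n => block 1 ((p : ℕ) + 1)).flatten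

open Fin.NatCast

lemma prod_block_aux (n : ℕ) : ∀ (k a : ℕ), a + k ≤ n →
    ((((List.range' (a+1) k).reverse.map (s n)).prod (↑a : Fin (n+1)) = ↑(a+k)) ∧
     (∀ i : Fin (n+1), a + k < i.val →
        (((List.range' (a+1) k).reverse.map (s n)).prod i = i))) := by
  intro k
  induction k with
  | zero => intro a ha; simp
  | succ k ih =>
    intro a ha
    have h1 : a + 1 + k ≤ n := by omega
    obtain ⟨ih1, ih2⟩ := ih (a+1) h1
    have hr : List.range' (a+1) (k+1) = (a+1) :: List.range' (a+1+1) k := List.range'_succ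
    have hs1 : s n (a+1) = Equiv.swap (↑a : Fin (n+1)) ↑(a+1) := by
      simp [s]
    have hav : ((↑a : Fin (n+1))).val = a := Fin.val_cast_of_lt (by omega)
    have ha1v : ((↑(a+1) : Fin (n+1))).val = a+1 := Fin.val_cast_of_lt (by omega)
    have hprod : ((List.range' (a+1) (k+1)).reverse.map (s n)).prod
        = ((List.range' (a+1+1) k).reverse.map (s n)).prod * s n (a+1) := by
      rw [hr]; simp
    constructor
    · rw [hprod]
      have h2 : (s n (a+1)) (↑a : Fin (n+1)) = ↑(a+1) := by
        rw [hs1]; exact Equiv.swap_apply_left _ _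
      simp only [Equiv.Perm.mul_apply, h2]
      rw [ih1]
      norm_num [Nat.add_assoc, Nat.add_comm 1 k]
    · intro i hi
      rw [hprod]
      have hne1 : i ≠ (↑a : Fin (n+1)) := by
        intro h; rw [h, hav] at hi; omega
      have hne2 : i ≠ (↑(a+1) : Fin (n+1)) := by
        intro h; rw [h, ha1v] at hi; omega
      have h2 : (s n (a+1)) i = i := by
        rw [hs1]; exact Equiv.swap_apply_of_ne_of_ne hne1 hne2
      simp only [Equiv.Perm.mul_apply, h2]
      exact ih2 i (by omega)

lemma aux (n : ℕ) : ∀ m, m ≤ n → ∀ u : Equiv.Perm (Fin (n+1)),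
    (∀ i : Fin (n+1), m < i.val → u i = i) →
    ∃ M : List ℕ, M.Sublist ((List.ofFn fun p : Fin m => block 1 ((p : ℕ) + 1)).flatten) ∧
      (M.map (s n)).prod = u := by
  intro m
  induction m with
  | zero =>
    intro _ u hu
    refine ⟨[], by simp, ?_⟩
    simp only [List.map_nil, List.prod_nil]
    have h0 : u 0 = 0 := by
      by_contra h
      have hv : 0 < (u 0).val := Nat.pos_of_ne_zero (fun hv => h (Fin.ext hv))
      have := hu (u 0) hv
      exact h (u.injective this)
    symm
    apply Equiv.ext
    intro i
    simp only [Equiv.Perm.one_apply]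
    rcases eq_or_ne i 0 with rfl | hi
    · exact h0
    · exact hu i (Nat.pos_of_ne_zero (fun hv => hi (Fin.ext hv)))
  | succ m ih =>
    intro hm u hu
    -- split off the last block
    have hsplit : ((List.ofFn fun p : Fin (m+1) => block 1 ((p : ℕ) + 1)).flatten) =
        ((List.ofFn fun p : Fin m => block 1 ((p : ℕ) + 1)).flatten) ++ block 1 (m+1) := by
      rw [List.ofFn_succ']
      simp [List.concat_eq_append]
    set j : Fin (n+1) := u⁻¹ ↑(m+1) with hj
    have hm1v : ((↑(m+1) : Fin (n+1))).val = m+1 := Fin.val_cast_of_lt (by omega)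
    have huj : u j = ↑(m+1) := Equiv.apply_symm_apply u _
    have hjle : j.val ≤ m + 1 := by
      by_contra h
      push_neg at h
      have := hu j h
      rw [this] at huj
      rw [huj] at h
      omega
    rcases eq_or_lt_of_le hjle with heq | hlt
    · -- u fixes m+1 already
      have hjj : j = ↑(m+1) := by
        apply Fin.ext; rw [heq, hm1v]
      have hufix : ∀ i : Fin (n+1), m < i.val → u i = i := by
        intro i hi
        rcases eq_or_lt_of_le (Nat.succ_le_of_lt hi) with h | h
        · have : i = ↑(m+1) := Fin.ext (by omega)
          rw [this, ← hjj, huj, hjj]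
        · exact hu i h
      obtain ⟨M, hM1, hM2⟩ := ih (by omega) u hufix
      exact ⟨M, by rw [hsplit]; exact hM1.trans (List.sublist_append_left _ _), hM2⟩
    · -- move j up to position m+1 using a prefix of the last block
      set a := j.val with hav
      set k := m + 1 - a with hk
      have hak : a + k = m + 1 := by omega
      have hakn : a + k ≤ n := by omega
      obtain ⟨hc1, hc2⟩ := prod_block_aux n k a hakn
      set C : List ℕ := (List.range' (a+1) k).reverse with hC
      set c : Equiv.Perm (Fin (n+1)) := (C.map (s n)).prod with hcdef
      have hca : c ↑a = ↑(m+1) := by rw [hcdef, hC, hc1, hak]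
      have hja : (↑a : Fin (n+1)) = j := Fin.cast_val_eq_self j
      -- v fixes everything above m
      set v : Equiv.Perm (Fin (n+1)) := u * c⁻¹ with hv
      have hvfix : ∀ i : Fin (n+1), m < i.val → v i = i := by
        intro i hi
        rcases eq_or_lt_of_le (Nat.succ_le_of_lt hi) with h | h
        · have hieq : i = ↑(m+1) := Fin.ext (by omega)
          have : c⁻¹ i = j := by
            rw [hieq, ← hca, ← hja]
            simp
          rw [hv]
          simp only [Equiv.Perm.mul_apply]
          rw [this, huj, hieq]
        · have hci : c i = i := by rw [hcdef, hC]; exact hc2 i (by omega)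
          have hcinv : c⁻¹ i = i := by
            conv_lhs => rw [← hci]
            simp
          rw [hv]
          simp only [Equiv.Perm.mul_apply, hcinv]
          exact hu i h
      obtain ⟨M1, hM1, hM2⟩ := ih (by omega) v hvfix
      refine ⟨M1 ++ C, ?_, ?_⟩
      · rw [hsplit]
        apply List.Sublist.append hM1
        -- C is a prefix of block 1 (m+1)
        have hB : block 1 (m+1) = (List.range' 1 (m+1)).reverse := by
          simp [block]
        have hsplit2 : List.range' 1 (m+1) = List.range' 1 a ++ List.range' (a+1) k := by
          have h5 := List.range'_append (s := 1) (m := a) (n := k) (step := 1)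
          simp only [one_mul] at h5
          have h3 : m + 1 = a + k := by omega
          have h4 : a + 1 = 1 + a := by omega
          rw [h3, h4]
          exact h5.symm
        rw [hB, hsplit2, List.reverse_append]
        exact (List.sublist_append_left _ _).trans (by rw [hC])
      · rw [List.map_append, List.prod_append, hM2, ← hcdef, hv]
        group

/-- Every permutation `u` of `Fin (n+1)` is the product of some sublist of the staircase
list `L_max`. -/
theorem stmt1 (n : ℕ) (hn : 1 ≤ n) (u : Equiv.Perm (Fin (n + 1))) :
    ∃ M : List ℕ, M.Sublist (Lmax n) ∧ (M.map (s n)).prod = u := by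
  exact aux n n le_rfl u (fun i hi => absurd i.isLt (by omega))
end
end

section
/- For every q ∈ (0,1), the operator norms satisfy ‖S∘T_q − S‖ = 1 − √(1 − q²) and ‖T_q∘S* − S*‖ = 1 − √(1 − q²); in particular S∘T_q converges to S and T_q∘S* converges to S* in operator norm as q → 0⁺. -/
noncomputable section

/-- `H = ℓ²(ℕ)` over `ℂ`. -/
abbrev H : Type := lp (fun _ : ℕ => ℂ) 2

/-- The standard orthonormal basis vector `e_m` of `H`. -/
def e (m : ℕ) : H := lp.single 2 m 1

section Aux

open ContinuousLinearMap Filter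
open scoped ENNReal

lemma e_apply (n m : ℕ) : (e n) m = if m = n then 1 else 0 := by
  rcases eq_or_ne m n with rfl | h
  · simp [e, lp.single_apply_self]
  · simp [e, lp.single_apply_ne 2 n _ h, h]

lemma two_toReal_pos : 0 < (2 : ℝ≥0∞).toReal := by norm_num

/-- Evaluation at coordinate `m` as a continuous linear map. -/
def coordCLM (m : ℕ) : H →L[ℂ] ℂ :=
  LinearMap.mkContinuous
    { toFun := fun f => f m
      map_add' := fun f g => by simp [lp.coeFn_add]
      map_smul' := fun c f => by simp [lp.coeFn_smul] }
    1 (fun f => by rw [one_mul]; exact lp.norm_apply_le_norm (by norm_num) f m)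

lemma coordCLM_apply (m : ℕ) (f : H) : coordCLM m f = f m := rfl

lemma diag_coord (A : H →L[ℂ] H) (c : ℕ → ℂ) (hA : ∀ n, A (e n) = c n • e n)
    (x : H) (m : ℕ) : A x m = c m * x m := by
  have hx : HasSum (fun n => lp.single 2 n (x n)) x :=
    lp.hasSum_single (by norm_num) x
  have h1 : HasSum (fun n => ((coordCLM m).comp A) (lp.single 2 n (x n)))
      (((coordCLM m).comp A) x) := ((coordCLM m).comp A).hasSum hx
  have hterm : ∀ n, ((coordCLM m).comp A) (lp.single 2 n (x n)) =
      if n = m then c m * x m else 0 := by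
    intro n
    have hs : lp.single 2 n (x n) = x n • e n := by
      rw [e, ← lp.single_smul]
      norm_num
    rw [ContinuousLinearMap.comp_apply, hs, map_smul, hA n]
    have hc : coordCLM m (x n • c n • e n) = x n * (c n * (e n) m) := by
      show ((x n • c n • e n : H) : ∀ _ : ℕ, ℂ) m = _
      simp [lp.coeFn_smul]
    rw [hc, e_apply]
    rcases eq_or_ne n m with rfl | h
    · simp [mul_comm]
    · simp [Ne.symm h, h]
  simp only [hterm] at h1
  have h2 : HasSum (fun n => if n = m then c m * x m else 0) (c m * x m) :=
    hasSum_ite_eq m _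
  exact (h1.unique h2)

lemma shift_diag_coord (S A : H →L[ℂ] H) (hS : ∀ (x : H) (m : ℕ), S x m = x (m + 1))
    (c : ℕ → ℂ) (hA : ∀ n, A (e n) = c n • e n) (x : H) (m : ℕ) :
    ((S ∘L A - S) x) m = (c (m + 1) - 1) * x (m + 1) := by
  have h0 : ((S ∘L A - S) x) m = (S (A x)) m - (S x) m := by
    rw [ContinuousLinearMap.sub_apply, ContinuousLinearMap.comp_apply, lp.coeFn_sub]
    rfl
  rw [h0, hS, hS, diag_coord A c hA]
  ring

lemma norm_e (n : ℕ) : ‖e n‖ = 1 := by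
  simpa [e] using lp.norm_single (p := 2) (E := fun _ : ℕ => ℂ) (by norm_num)
    n (1 : ℂ)

lemma norm_shift_diag (S A : H →L[ℂ] H) (hS : ∀ (x : H) (m : ℕ), S x m = x (m + 1))
    (c : ℕ → ℂ) (hA : ∀ n, A (e n) = c n • e n) (C : ℝ) (hC0 : 0 ≤ C)
    (hbound : ∀ m, ‖c (m + 1) - 1‖ ≤ C) (hex : ‖c 1 - 1‖ = C) :
    ‖S ∘L A - S‖ = C := by
  apply le_antisymm
  · apply ContinuousLinearMap.opNorm_le_bound _ hC0
    intro x
    have hs1 := lp.hasSum_norm two_toReal_pos ((S ∘L A - S) x)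
    have hs2 := lp.hasSum_norm two_toReal_pos x
    have h2 : (2 : ℝ≥0∞).toReal = (2 : ℝ) := by norm_num
    rw [h2] at hs1 hs2
    have hrp : ∀ t : ℝ, t ^ (2 : ℝ) = t ^ 2 := fun t => by
      rw [← Real.rpow_natCast t 2]; norm_num
    simp_rw [hrp] at hs1 hs2
    have hmul : HasSum (fun m => C ^ 2 * ‖x m‖ ^ 2) (C ^ 2 * ‖x‖ ^ 2) := hs2.mul_left _
    have hterm2 : ∀ m, ‖((S ∘L A - S) x) m‖ ^ 2 ≤ C ^ 2 * ‖x (m + 1)‖ ^ 2 := by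
      intro m
      have hk : ‖((S ∘L A - S) x) m‖ ≤ C * ‖x (m + 1)‖ := by
        rw [shift_diag_coord S A hS c hA, norm_mul]
        exact mul_le_mul_of_nonneg_right (hbound m) (norm_nonneg _)
      calc ‖((S ∘L A - S) x) m‖ ^ 2 ≤ (C * ‖x (m + 1)‖) ^ 2 := by
            exact pow_le_pow_left₀ (norm_nonneg _) hk 2
        _ = C ^ 2 * ‖x (m + 1)‖ ^ 2 := by ring
    have hle : ‖(S ∘L A - S) x‖ ^ 2 ≤ C ^ 2 * ‖x‖ ^ 2 :=
      hasSum_le_inj (fun m => m + 1) (fun a b h => Nat.succ_injective h)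
        (fun a _ => by positivity) hterm2 hs1 hmul
    have hsq : ‖(S ∘L A - S) x‖ ^ 2 ≤ (C * ‖x‖) ^ 2 := by
      calc ‖(S ∘L A - S) x‖ ^ 2 ≤ C ^ 2 * ‖x‖ ^ 2 := hle
        _ = (C * ‖x‖) ^ 2 := by ring
    exact le_of_pow_le_pow_left₀ two_ne_zero (by positivity) hsq
  · have himg : (S ∘L A - S) (e 1) = (c 1 - 1) • e 0 := by
      apply lp.ext
      funext m
      have hL : ((S ∘L A - S) (e 1)) m = (c (m + 1) - 1) * (e 1) (m + 1) :=
        shift_diag_coord S A hS c hA (e 1) m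
      have hR : (((c 1 - 1) • e 0 : H) : ∀ _ : ℕ, ℂ) m = (c 1 - 1) * (e 0) m := by
        simp [lp.coeFn_smul]
      show ((S ∘L A - S) (e 1)) m = (((c 1 - 1) • e 0 : H) : ∀ _ : ℕ, ℂ) m
      rw [hL, hR, e_apply, e_apply]
      rcases Nat.eq_zero_or_pos m with rfl | hm
      · simp
      · have h1 : m + 1 ≠ 1 := by omega
        have h2 : m ≠ 0 := by omega
        simp [h1, h2]
    have hval : ‖(S ∘L A - S) (e 1)‖ = C := by
      rw [himg, norm_smul, norm_e, mul_one, hex]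
    have hge := (S ∘L A - S).unit_le_opNorm (e 1) (le_of_eq (norm_e 1))
    linarith [hval ▸ hge]

lemma diag_selfAdjoint (A : H →L[ℂ] H) (r : ℕ → ℝ)
    (hA : ∀ n, A (e n) = ((r n : ℝ) : ℂ) • e n) : IsSelfAdjoint A := by
  rw [ContinuousLinearMap.isSelfAdjoint_iff_isSymmetric]
  intro x y
  simp only [ContinuousLinearMap.coe_coe]
  rw [lp.inner_eq_tsum, lp.inner_eq_tsum]
  refine tsum_congr fun m => ?_
  rw [RCLike.inner_apply, RCLike.inner_apply,
    diag_coord A (fun n => ((r n : ℝ) : ℂ)) hA x m,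
    diag_coord A (fun n => ((r n : ℝ) : ℂ)) hA y m, map_mul, Complex.conj_ofReal]
  ring

end Aux

open Filter in
/-- Let `S` be the backward shift `(S x)(m) = x(m+1)` (so `S*` is the forward shift) and,
for `q ∈ (0,1)`, let `T_q` be the bounded diagonal operator with
`T_q e_m = √(1 − q^{2m}) · e_m`.  Then `‖S∘T_q − S‖ = 1 − √(1 − q²)` and
`‖T_q∘S* − S*‖ = 1 − √(1 − q²)` for all `q ∈ (0,1)`; in particular `S∘T_q → S` and
`T_q∘S* → S*` in operator norm as `q → 0⁺`. -/
theorem stmt4 (S : H →L[ℂ] H) (T : ℝ → H →L[ℂ] H)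
    (hS : ∀ (x : H) (m : ℕ), S x m = x (m + 1))
    (hT : ∀ q ∈ Set.Ioo (0 : ℝ) 1, ∀ m : ℕ,
      T q (e m) = ((Real.sqrt (1 - q ^ (2 * m)) : ℝ) : ℂ) • e m) :
    (∀ q ∈ Set.Ioo (0 : ℝ) 1,
        ‖S ∘L T q - S‖ = 1 - Real.sqrt (1 - q ^ 2) ∧
        ‖T q ∘L ContinuousLinearMap.adjoint S - ContinuousLinearMap.adjoint S‖
          = 1 - Real.sqrt (1 - q ^ 2)) ∧
      Filter.Tendsto (fun q => S ∘L T q) (nhdsWithin 0 (Set.Ioi (0 : ℝ))) (nhds S) ∧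
      Filter.Tendsto (fun q => T q ∘L ContinuousLinearMap.adjoint S)
        (nhdsWithin 0 (Set.Ioi (0 : ℝ))) (nhds (ContinuousLinearMap.adjoint S)) := by
  have hnormA : ∀ q ∈ Set.Ioo (0 : ℝ) 1,
      ‖S ∘L T q - S‖ = 1 - Real.sqrt (1 - q ^ 2) := by
    intro q hq
    obtain ⟨hq0, hq1⟩ := hq
    have hqsq : q ^ 2 ≤ 1 := by nlinarith
    have hsqrt1 : Real.sqrt (1 - q ^ 2) ≤ 1 := Real.sqrt_le_one.mpr (by nlinarith)
    have hC0 : (0 : ℝ) ≤ 1 - Real.sqrt (1 - q ^ 2) := by linarith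
    have hkey : ∀ m : ℕ, ‖((Real.sqrt (1 - q ^ (2 * m)) : ℝ) : ℂ) - 1‖ =
        1 - Real.sqrt (1 - q ^ (2 * m)) := by
      intro m
      have hmle : q ^ (2 * m) ≤ 1 := pow_le_one₀ hq0.le hq1.le
      have h1 : Real.sqrt (1 - q ^ (2 * m)) ≤ 1 :=
        Real.sqrt_le_one.mpr (by nlinarith [pow_nonneg hq0.le (2 * m)])
      rw [show ((Real.sqrt (1 - q ^ (2 * m)) : ℝ) : ℂ) - 1 =
        ((Real.sqrt (1 - q ^ (2 * m)) - 1 : ℝ) : ℂ) by push_cast; ring]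
      rw [Complex.norm_real, Real.norm_eq_abs, abs_of_nonpos (by linarith), neg_sub]
    refine norm_shift_diag S (T q) hS (fun m => ((Real.sqrt (1 - q ^ (2 * m)) : ℝ) : ℂ))
      (hT q ⟨hq0, hq1⟩) _ hC0 ?_ ?_
    · intro m
      rw [hkey (m + 1)]
      have hle2 : q ^ (2 * (m + 1)) ≤ q ^ 2 := by
        have : q ^ (2 * (m + 1)) = q ^ 2 * q ^ (2 * m) := by ring
        rw [this]
        have hm1 : q ^ (2 * m) ≤ 1 := pow_le_one₀ hq0.le hq1.le
        nlinarith [pow_nonneg hq0.le 2, pow_nonneg hq0.le (2 * m)]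
      have := Real.sqrt_le_sqrt (show 1 - q ^ 2 ≤ 1 - q ^ (2 * (m + 1)) by linarith)
      linarith
    · rw [hkey 1]
  have hnormB : ∀ q ∈ Set.Ioo (0 : ℝ) 1,
      ‖T q ∘L ContinuousLinearMap.adjoint S - ContinuousLinearMap.adjoint S‖
        = 1 - Real.sqrt (1 - q ^ 2) := by
    intro q hq
    have hsa : IsSelfAdjoint (T q) :=
      diag_selfAdjoint (T q) (fun m => Real.sqrt (1 - q ^ (2 * m))) (hT q hq)
    have heq : T q ∘L ContinuousLinearMap.adjoint S - ContinuousLinearMap.adjoint S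
        = ContinuousLinearMap.adjoint (S ∘L T q - S) := by
      rw [map_sub, ContinuousLinearMap.adjoint_comp, hsa.adjoint_eq]
    rw [heq, ContinuousLinearMap.adjoint.norm_map]
    exact hnormA q hq
  have hev : ∀ᶠ q in nhdsWithin 0 (Set.Ioi (0 : ℝ)), q ∈ Set.Ioo (0 : ℝ) 1 :=
    Ioo_mem_nhdsGT_of_mem ⟨le_refl 0, one_pos⟩
  have hlim : Tendsto (fun q : ℝ => 1 - Real.sqrt (1 - q ^ 2))
      (nhdsWithin 0 (Set.Ioi (0 : ℝ))) (nhds 0) := by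
    have hcont : Continuous fun q : ℝ => 1 - Real.sqrt (1 - q ^ 2) := by
      fun_prop
    have h0 := hcont.tendsto 0
    simp only [ne_eq, OfNat.ofNat_ne_zero, not_false_eq_true, zero_pow, sub_zero,
      Real.sqrt_one, sub_self] at h0
    exact h0.mono_left nhdsWithin_le_nhds
  refine ⟨fun q hq => ⟨hnormA q hq, hnormB q hq⟩, ?_, ?_⟩
  · rw [tendsto_iff_norm_sub_tendsto_zero]
    exact hlim.congr' (hev.mono fun q hq => (hnormA q hq).symm)
  · rw [tendsto_iff_norm_sub_tendsto_zero]
    exact hlim.congr' (hev.mono fun q hq => (hnormB q hq).symm)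
end
end
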